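/- arXiv:2502.18317 — 3 statements merged into one kernel-verified Lean document; each statement's English description precedes it below -/
import Mathlib

section
/- Let A ∈ ℂ^{n×n} be invertible and diagonalizable, A = ZΛZ^{-1} with Λ diagonal, and let Ax = b with ‖b‖ = 1. Let p be a polynomial, x̂ = p(A)b, r = b − A x̂. Write Z^{-1}b = (β̂₁,…,β̂ₙ)ᵀ and set βᵢ = β̂ᵢ/‖Z^{-1}‖. If all βᵢ ≠ 0, then ‖A^{-1} − p(A)‖/‖A^{-1}‖ ≤ κ(Z)·‖r‖/minᵢ|βᵢ|, where κ(Z) = ‖Z‖‖Z^{-1}‖. -/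
open scoped Matrix.Norms.L2Operator Matrix
open Polynomial

lemma aeval_mul_conj {S : Type*} [Ring S] [Algebra ℂ S] (g h a : S)
    (hgh : g * h = 1) (hhg : h * g = 1) (p : ℂ[X]) :
    aeval (g * a * h) p = g * aeval a p * h := by
  have hpow : ∀ k : ℕ, (g * a * h) ^ k = g * a ^ k * h := by
    intro k
    induction k with
    | zero => simp [hgh]
    | succ k ih =>
        rw [pow_succ, ih]
        calc g * a ^ k * h * (g * a * h) = g * a ^ k * ((h * g) * (a * h)) := by
              simp only [mul_assoc]
        _ = g * a ^ (k + 1) * h := by rw [hhg, one_mul, pow_succ]; simp only [mul_assoc]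
  induction p using Polynomial.induction_on' with
  | add p q hp hq => simp [map_add, hp, hq, mul_add, add_mul]
  | monomial k c =>
      rw [aeval_monomial, aeval_monomial, hpow]
      rw [← mul_assoc, ← mul_assoc, Algebra.commutes]
      simp only [mul_assoc]

lemma euclidean_coord_le {m : Type*} [Fintype m] (v : EuclideanSpace ℂ m) (i : m) :
    ‖v i‖ ≤ ‖v‖ := by
  rw [EuclideanSpace.norm_eq]
  have : ‖v i‖ = Real.sqrt (‖v i‖ ^ 2) := by
    rw [Real.sqrt_sq (norm_nonneg _)]
  rw [this]
  apply Real.sqrt_le_sqrt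
  exact Finset.single_le_sum (fun j _ => sq_nonneg ‖v j‖) (Finset.mem_univ i)

lemma l2_opNorm_diagonal_le {m : Type*} [Fintype m] [DecidableEq m]
    (d : m → ℂ) (C : ℝ) (hC : 0 ≤ C) (h : ∀ i, ‖d i‖ ≤ C) :
    ‖Matrix.diagonal d‖ ≤ C := by
  rw [Matrix.l2_opNorm_def]
  apply ContinuousLinearMap.opNorm_le_bound _ hC
  intro x
  show ‖Matrix.toEuclideanLin (Matrix.diagonal d) x‖ ≤ C * ‖x‖
  set y := Matrix.toEuclideanLin (Matrix.diagonal d) x with hy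
  have hyc : ∀ i, y i = d i * x i := by
    intro i
    simp [hy, Matrix.toEuclideanLin_apply, Matrix.mulVec_diagonal]
  have h1 : ‖y‖ = Real.sqrt (∑ i, ‖y i‖ ^ 2) := EuclideanSpace.norm_eq y
  have h2 : ‖(x : EuclideanSpace ℂ m)‖ = Real.sqrt (∑ i, ‖x i‖ ^ 2) :=
    EuclideanSpace.norm_eq x
  rw [h1, h2, ← Real.sqrt_sq hC, ← Real.sqrt_mul (sq_nonneg C)]
  apply Real.sqrt_le_sqrt
  rw [Finset.mul_sum]
  apply Finset.sum_le_sum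
  intro i _
  rw [hyc i, norm_mul, mul_pow]
  have := h i
  gcongr

/-- Upper bound on the relative error of the polynomial approximation to the inverse
in terms of the residual norm, the eigenvector condition number, and the smallest
eigencomponent of the right-hand side. -/
theorem poly_inv_error_upper_bound (n : ℕ)
    (A Z : Matrix (Fin (n + 1)) (Fin (n + 1)) ℂ) (Λ : Fin (n + 1) → ℂ)
    (hA : IsUnit A.det) (hZ : IsUnit Z.det)
    (hdiag : A = Z * Matrix.diagonal Λ * Z⁻¹)
    (b : EuclideanSpace ℂ (Fin (n + 1))) (hb : ‖b‖ = 1)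
    (x : EuclideanSpace ℂ (Fin (n + 1)))
    (hx : (WithLp.equiv 2 (Fin (n + 1) → ℂ)).symm (A.mulVec x) = b)
    (p : Polynomial ℂ)
    (xh : EuclideanSpace ℂ (Fin (n + 1)))
    (hxh : xh = (WithLp.equiv 2 (Fin (n + 1) → ℂ)).symm ((Polynomial.aeval A p).mulVec b))
    (r : EuclideanSpace ℂ (Fin (n + 1)))
    (hr : r = b - (WithLp.equiv 2 (Fin (n + 1) → ℂ)).symm (A.mulVec xh))
    (β : Fin (n + 1) → ℂ)
    (hβ : ∀ i, β i = (Z⁻¹.mulVec b) i / ‖Z⁻¹‖)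
    (hβ0 : ∀ i, β i ≠ 0) :
    ‖A⁻¹ - Polynomial.aeval A p‖ / ‖A⁻¹‖ ≤
      (‖Z‖ * ‖Z⁻¹‖) * ‖r‖ /
        (Finset.univ.inf' Finset.univ_nonempty fun i => ‖β i‖) := by
  classical
  set M : Matrix (Fin (n + 1)) (Fin (n + 1)) ℂ := Matrix.diagonal Λ with hM
  set d : Fin (n + 1) → ℂ := fun i => 1 - Λ i * p.eval (Λ i) with hd
  set E : Matrix (Fin (n + 1)) (Fin (n + 1)) ℂ := 1 - A * aeval A p with hEdef
  have hZZ : Z⁻¹ * Z = 1 := Matrix.nonsing_inv_mul Z hZ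
  have hZZ' : Z * Z⁻¹ = 1 := Matrix.mul_nonsing_inv Z hZ
  -- aeval of the conjugated matrix
  have haeval : aeval A p = Z * aeval M p * Z⁻¹ := by
    rw [hdiag]; exact aeval_mul_conj Z Z⁻¹ M hZZ' hZZ p
  have haevalM : aeval M p = Matrix.diagonal fun i => p.eval (Λ i) := by
    have h1 : aeval M p = (Matrix.diagonalAlgHom ℂ : (Fin (n+1) → ℂ) →ₐ[ℂ] _) (aeval Λ p) := by
      rw [hM]
      exact (aeval_algHom_apply ((Matrix.diagonalAlgHom ℂ : (Fin (n+1) → ℂ) →ₐ[ℂ] _)) Λ p)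
    have h2 : (aeval Λ p : Fin (n + 1) → ℂ) = fun i => p.eval (Λ i) := by
      funext i
      have h3 : (aeval Λ p) i = aeval (Λ i) p :=
        (aeval_algHom_apply (Pi.evalAlgHom ℂ (fun _ => ℂ) i) Λ p).symm
      rw [h3, aeval_def, eval₂_eq_eval_map, Algebra.algebraMap_self, Polynomial.map_id]
    rw [h1, Matrix.diagonalAlgHom_apply, h2]
  have hDd : Matrix.diagonal d = 1 - M * Matrix.diagonal fun i => p.eval (Λ i) := by
    rw [hM, Matrix.diagonal_mul_diagonal, ← Matrix.diagonal_one, ← Matrix.diagonal_sub]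
  have hE : E = Z * Matrix.diagonal d * Z⁻¹ := by
    rw [hEdef, hDd, haeval, haevalM, hdiag]
    rw [Matrix.mul_sub, Matrix.sub_mul, Matrix.mul_one, hZZ']
    congr 1
    simp only [Matrix.mul_assoc]
    rw [← Matrix.mul_assoc Z⁻¹ Z, hZZ, Matrix.one_mul]
  -- the residual as a matrix-vector product
  have hrv : ∀ i, (r : Fin (n + 1) → ℂ) i = (E.mulVec b) i := by
    intro i
    rw [hr, hxh]
    show b i - (A.mulVec ((WithLp.equiv 2 _).symm ((aeval A p).mulVec b))) i
        = ((1 - A * aeval A p).mulVec b) i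
    have : A.mulVec ((WithLp.equiv 2 (Fin (n + 1) → ℂ)).symm ((aeval A p).mulVec b))
        = (A * aeval A p).mulVec b := by
      rw [← Matrix.mulVec_mulVec]; rfl
    rw [this, Matrix.sub_mulVec, Matrix.one_mulVec]
    rfl
  -- coordinates of Z⁻¹ r
  have hcoord : ∀ i, (Z⁻¹.mulVec r) i = d i * (Z⁻¹.mulVec b) i := by
    intro i
    have h1 : Z⁻¹.mulVec (r : Fin (n + 1) → ℂ) = Z⁻¹.mulVec (E.mulVec b) :=
      congrArg (fun v => Z⁻¹.mulVec v) (funext hrv)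
    rw [h1, Matrix.mulVec_mulVec, hE, ← Matrix.mul_assoc, ← Matrix.mul_assoc, hZZ,
      Matrix.one_mul, ← Matrix.mulVec_mulVec, Matrix.mulVec_diagonal]
  have hZr : ‖(WithLp.equiv 2 (Fin (n + 1) → ℂ)).symm (Z⁻¹.mulVec r)‖ ≤ ‖Z⁻¹‖ * ‖r‖ :=
    Matrix.l2_opNorm_mulVec Z⁻¹ r
  have hkey : ∀ i, ‖d i‖ * ‖(Z⁻¹.mulVec b) i‖ ≤ ‖Z⁻¹‖ * ‖r‖ := by
    intro i
    calc ‖d i‖ * ‖(Z⁻¹.mulVec b) i‖ = ‖(Z⁻¹.mulVec r) i‖ := by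
          rw [hcoord i, norm_mul]
    _ ≤ ‖(WithLp.equiv 2 (Fin (n + 1) → ℂ)).symm (Z⁻¹.mulVec r)‖ :=
          euclidean_coord_le ((WithLp.equiv 2 (Fin (n + 1) → ℂ)).symm (Z⁻¹.mulVec r)) i
    _ ≤ ‖Z⁻¹‖ * ‖r‖ := hZr
  -- positivity facts
  have hZinv_ne : (Z⁻¹ : Matrix (Fin (n + 1)) (Fin (n + 1)) ℂ) ≠ 0 := by
    intro h0
    have : (1 : Matrix (Fin (n + 1)) (Fin (n + 1)) ℂ) = 0 := by
      rw [← hZZ, h0, Matrix.zero_mul]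
    exact one_ne_zero this
  have hZn : 0 < ‖Z⁻¹‖ := norm_pos_iff.mpr hZinv_ne
  have habs : ∀ i, ‖β i‖ = ‖(Z⁻¹.mulVec b) i‖ / ‖Z⁻¹‖ := by
    intro i
    rw [hβ i, norm_div, Complex.norm_real, norm_norm]
  set m : ℝ := Finset.univ.inf' Finset.univ_nonempty fun i => ‖β i‖ with hm
  have hm0 : 0 < m := by
    rw [hm, Finset.lt_inf'_iff]
    intro i _
    exact norm_pos_iff.mpr (hβ0 i)
  have hdi : ∀ i, ‖d i‖ ≤ ‖r‖ / m := by
    intro i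
    rw [le_div_iff₀ hm0]
    have h1 : m ≤ ‖β i‖ :=
      Finset.inf'_le _ (Finset.mem_univ i)
    calc ‖d i‖ * m ≤ ‖d i‖ * ‖β i‖ :=
          mul_le_mul_of_nonneg_left h1 (norm_nonneg _)
    _ = ‖d i‖ * ‖(Z⁻¹.mulVec b) i‖ / ‖Z⁻¹‖ := by
          rw [habs i, mul_div_assoc]
    _ ≤ ‖Z⁻¹‖ * ‖r‖ / ‖Z⁻¹‖ := (div_le_div_iff_of_pos_right hZn).mpr (hkey i)
    _ = ‖r‖ := mul_div_cancel_left₀ _ hZn.ne'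
  have hD : ‖Matrix.diagonal d‖ ≤ ‖r‖ / m :=
    l2_opNorm_diagonal_le d (‖r‖ / m) (div_nonneg (norm_nonneg r) hm0.le) hdi
  have hEn : ‖E‖ ≤ ‖Z‖ * ‖Z⁻¹‖ * (‖r‖ / m) := by
    rw [hE]
    calc ‖Z * Matrix.diagonal d * Z⁻¹‖ ≤ ‖Z * Matrix.diagonal d‖ * ‖Z⁻¹‖ :=
          Matrix.l2_opNorm_mul _ _
    _ ≤ ‖Z‖ * ‖Matrix.diagonal d‖ * ‖Z⁻¹‖ :=
          mul_le_mul_of_nonneg_right (Matrix.l2_opNorm_mul _ _) (norm_nonneg _)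
    _ ≤ ‖Z‖ * (‖r‖ / m) * ‖Z⁻¹‖ := by
          have := mul_le_mul_of_nonneg_left hD (norm_nonneg Z)
          exact mul_le_mul_of_nonneg_right this (norm_nonneg _)
    _ = ‖Z‖ * ‖Z⁻¹‖ * (‖r‖ / m) := by ring
  have hid : A⁻¹ - aeval A p = A⁻¹ * E := by
    rw [hEdef, Matrix.mul_sub, Matrix.mul_one, ← Matrix.mul_assoc,
      Matrix.nonsing_inv_mul A hA, Matrix.one_mul]
  have hAinv_ne : (A⁻¹ : Matrix (Fin (n + 1)) (Fin (n + 1)) ℂ) ≠ 0 := by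
    intro h0
    have : (1 : Matrix (Fin (n + 1)) (Fin (n + 1)) ℂ) = 0 := by
      rw [← Matrix.nonsing_inv_mul A hA, h0, Matrix.zero_mul]
    exact one_ne_zero this
  have hAn : 0 < ‖A⁻¹‖ := norm_pos_iff.mpr hAinv_ne
  rw [div_le_iff₀ hAn]
  calc ‖A⁻¹ - aeval A p‖ = ‖A⁻¹ * E‖ := by rw [hid]
  _ ≤ ‖A⁻¹‖ * ‖E‖ := Matrix.l2_opNorm_mul _ _
  _ ≤ ‖A⁻¹‖ * (‖Z‖ * ‖Z⁻¹‖ * (‖r‖ / m)) :=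
        mul_le_mul_of_nonneg_left hEn (norm_nonneg _)
  _ = ‖Z‖ * ‖Z⁻¹‖ * ‖r‖ / m * ‖A⁻¹‖ := by ring
end

section
/- Let A ∈ ℂ^{n×n} be Hermitian invertible and indefinite, with negative eigenvalues λ_{−m} ≤ ⋯ ≤ λ_{−1} < 0 and positive eigenvalues 0 < λ₁ ≤ ⋯ ≤ λ_p. Then every harmonic Ritz value θ of A (with respect to any subspace) satisfies θ ≤ λ_{−1} or θ ≥ λ₁; i.e., no harmonic Ritz value lies in the open interval (λ_{−1}, λ₁) containing the origin. -/
open scoped Matrix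

/-- For a Hermitian invertible indefinite matrix with largest negative eigenvalue
`λ₋₁` and smallest positive eigenvalue `λ₁`, no harmonic Ritz value lies in the
open interval `(λ₋₁, λ₁)` containing the origin. -/
theorem harmonic_ritz_gap (n : ℕ)
    (A : Matrix (Fin n) (Fin n) ℂ) (hA : A.IsHermitian) (hdet : IsUnit A.det)
    (lamNeg lamPos : ℝ) (hneg : lamNeg < 0) (hpos : 0 < lamPos)
    (hneg_mem : ∃ i, hA.eigenvalues i = lamNeg)
    (hpos_mem : ∃ i, hA.eigenvalues i = lamPos)
    (hgap : ∀ i, hA.eigenvalues i ≤ lamNeg ∨ lamPos ≤ hA.eigenvalues i)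
    (θ : ℝ) (hθ : θ ≠ 0)
    (v : Fin n → ℂ) (hv : v ≠ 0)
    -- `θ` is a harmonic Ritz value: `1/θ` is a Rayleigh quotient of `A⁻¹`
    (hW : ((θ : ℂ))⁻¹ = (star v ⬝ᵥ A⁻¹.mulVec v) / (star v ⬝ᵥ v)) :
    θ ≤ lamNeg ∨ lamPos ≤ θ := by
  classical
  set μ : Fin n → ℝ := hA.eigenvalues with hμ
  -- eigenvalues are nonzero
  have hμne : ∀ i, μ i ≠ 0 := by
    intro i hi
    have hd := hA.det_eq_prod_eigenvalues
    rw [hd] at hdet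
    have := hdet
    rw [Finset.prod_eq_zero (Finset.mem_univ i) (by simpa using hi)] at this
    exact (not_isUnit_zero this).elim
  set U : Matrix (Fin n) (Fin n) ℂ := (hA.eigenvectorUnitary : Matrix (Fin n) (Fin n) ℂ) with hU
  have hUmem : U ∈ Matrix.unitaryGroup (Fin n) ℂ := hA.eigenvectorUnitary.2
  have hUU : star U * U = 1 := hUmem.1
  have hUU' : U * star U = 1 := hUmem.2
  set D : Matrix (Fin n) (Fin n) ℂ := Matrix.diagonal (fun i => (μ i : ℂ)) with hD
  set Dinv : Matrix (Fin n) (Fin n) ℂ := Matrix.diagonal (fun i => ((μ i : ℝ)⁻¹ : ℂ)) with hDinv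
  have hspec : A = U * D * star U := hA.spectral_theorem
  have hDD : D * Dinv = 1 := by
    have he : (fun i => (μ i : ℂ) * ((μ i : ℝ)⁻¹ : ℂ)) = fun _ => (1 : ℂ) := by
      funext i
      push_cast
      exact mul_inv_cancel₀ (by exact_mod_cast hμne i)
    rw [hD, hDinv, Matrix.diagonal_mul_diagonal, he, Matrix.diagonal_one]
  have hAinv : A⁻¹ = U * Dinv * star U := by
    apply Matrix.inv_eq_right_inv
    rw [hspec]
    calc U * D * star U * (U * Dinv * star U)
        = U * (D * ((star U * U) * (Dinv * star U))) := by simp only [mul_assoc]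
      _ = U * (D * Dinv) * star U := by rw [hUU, one_mul]; simp only [mul_assoc]
      _ = 1 := by rw [hDD, mul_one, hUU']
  set w : Fin n → ℂ := star U *ᵥ v with hw
  have key : ∀ (M : Matrix (Fin n) (Fin n) ℂ),
      star v ⬝ᵥ (U * M * star U) *ᵥ v = star w ⬝ᵥ M *ᵥ w := by
    intro M
    rw [hw, ← Matrix.mulVec_mulVec, ← Matrix.mulVec_mulVec, Matrix.dotProduct_mulVec (star v) U,
      Matrix.star_mulVec, Matrix.star_eq_conjTranspose, Matrix.conjTranspose_conjTranspose]
  have hnum : star v ⬝ᵥ A⁻¹ *ᵥ v = ∑ i, ((μ i)⁻¹ : ℂ) * Complex.normSq (w i) := by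
    rw [hAinv, key, hDinv]
    simp only [dotProduct, Matrix.mulVec_diagonal, Pi.star_apply]
    congr 1; funext i
    have hst : star (w i) = (starRingEnd ℂ) (w i) := rfl
    rw [hst, mul_left_comm, ← Complex.normSq_eq_conj_mul_self]
  have hden : star v ⬝ᵥ v = ∑ i, (Complex.normSq (w i) : ℂ) := by
    have : star v ⬝ᵥ (U * 1 * star U) *ᵥ v = star w ⬝ᵥ (1 : Matrix (Fin n) (Fin n) ℂ) *ᵥ w := key 1
    rw [mul_one, hUU', Matrix.one_mulVec] at this
    rw [this, Matrix.one_mulVec]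
    simp only [dotProduct, Pi.star_apply]
    congr 1; funext i
    have hst : star (w i) = (starRingEnd ℂ) (w i) := rfl
    rw [hst, ← Complex.normSq_eq_conj_mul_self]
  -- w ≠ 0
  have hwne : w ≠ 0 := by
    intro h0
    apply hv
    have h1 : U *ᵥ w = v := by
      rw [hw, Matrix.mulVec_mulVec, hUU', Matrix.one_mulVec]
    rw [h0, Matrix.mulVec_zero] at h1
    exact h1.symm
  set c : Fin n → ℝ := fun i => Complex.normSq (w i) with hc
  have hc0 : ∀ i, 0 ≤ c i := fun i => Complex.normSq_nonneg _
  set S : ℝ := ∑ i, c i with hS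
  have hSpos : 0 < S := by
    obtain ⟨i, hi⟩ := Function.ne_iff.mp hwne
    exact Finset.sum_pos' (fun i _ => hc0 i) ⟨i, Finset.mem_univ i,
      Complex.normSq_pos.mpr hi⟩
  set T : ℝ := ∑ i, (μ i)⁻¹ * c i with hT
  have hreal : (θ⁻¹ : ℝ) = T / S := by
    have : ((θ⁻¹ : ℝ) : ℂ) = ((T / S : ℝ) : ℂ) := by
      push_cast
      rw [hW, hnum, hden, hT, hS]
      push_cast
      norm_num
      rfl
    exact_mod_cast this
  -- bounds on each (μ i)⁻¹
  have hbound : ∀ i, lamNeg⁻¹ ≤ (μ i)⁻¹ ∧ (μ i)⁻¹ ≤ lamPos⁻¹ := by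
    intro i
    rcases hgap i with h | h
    · have hμneg : μ i < 0 := lt_of_le_of_lt h hneg
      constructor
      · exact (inv_le_inv_of_neg hneg hμneg).mpr h
      · exact le_trans (le_of_lt (inv_lt_zero.mpr hμneg)) (le_of_lt (inv_pos.mpr hpos))
    · have hμpos : 0 < μ i := lt_of_lt_of_le hpos h
      constructor
      · exact le_trans (le_of_lt (inv_lt_zero.mpr hneg)) (le_of_lt (inv_pos.mpr hμpos))
      · exact inv_anti₀ hpos h
  have hTlo : lamNeg⁻¹ * S ≤ T := by
    rw [hS, Finset.mul_sum, hT]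
    exact Finset.sum_le_sum fun i _ => mul_le_mul_of_nonneg_right (hbound i).1 (hc0 i)
  have hThi : T ≤ lamPos⁻¹ * S := by
    rw [hS, Finset.mul_sum, hT]
    exact Finset.sum_le_sum fun i _ => mul_le_mul_of_nonneg_right (hbound i).2 (hc0 i)
  have hlo : lamNeg⁻¹ ≤ θ⁻¹ := by
    rw [hreal, le_div_iff₀ hSpos]; exact hTlo
  have hhi : θ⁻¹ ≤ lamPos⁻¹ := by
    rw [hreal, div_le_iff₀ hSpos]; exact hThi
  rcases lt_or_gt_of_ne hθ with hθneg | hθpos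
  · left
    have hθinvneg : θ⁻¹ < 0 := inv_lt_zero.mpr hθneg
    calc θ = (θ⁻¹)⁻¹ := (inv_inv θ).symm
      _ ≤ (lamNeg⁻¹)⁻¹ := (inv_le_inv_of_neg hθinvneg (inv_lt_zero.mpr hneg)).mpr hlo
      _ = lamNeg := inv_inv lamNeg
  · right
    have hθinvpos : 0 < θ⁻¹ := inv_pos.mpr hθpos
    calc lamPos = (lamPos⁻¹)⁻¹ := (inv_inv lamPos).symm
      _ ≤ (θ⁻¹)⁻¹ := (inv_anti₀ hθinvpos hhi)
      _ = θ := inv_inv θ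
end

section
/- Let A ∈ ℂ^{n×n} be diagonalizable, A = ZΛZ^{-1}, with eigenvalues λ₁,…,λₙ. Let b⁽¹⁾ and b⁽²⁾ be unit vectors with eigenvector expansions b⁽¹⁾ = Σ βᵢ⁽¹⁾ zᵢ and b⁽²⁾ = Σ βᵢ⁽²⁾ zᵢ where zᵢ are the columns of Z, and assume all βᵢ⁽¹⁾ ≠ 0. Let p be any polynomial, π(z) = 1 − z p(z), and define residuals r⁽¹⁾ = b⁽¹⁾ − A p(A) b⁽¹⁾ and r⁽²⁾ = b⁽²⁾ − A p(A) b⁽²⁾. Then ‖r⁽²⁾‖ ≤ ‖Z‖‖Z^{-1}‖ · (maxᵢ |βᵢ⁽²⁾/βᵢ⁽¹⁾|) · ‖r⁽¹⁾‖. -/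
open scoped Matrix.Norms.L2Operator Matrix

lemma diag_l2_norm_le {m : ℕ} (c : Fin (m + 1) → ℂ) :
    ‖(Matrix.diagonal c : Matrix (Fin (m + 1)) (Fin (m + 1)) ℂ)‖ ≤
      Finset.univ.sup' Finset.univ_nonempty fun i => ‖c i‖ := by
  set S := Finset.univ.sup' Finset.univ_nonempty fun i => ‖c i‖ with hS
  have hS0 : 0 ≤ S :=
    le_trans (norm_nonneg (c 0)) (Finset.le_sup' (fun i => ‖c i‖) (Finset.mem_univ (0 : Fin (m+1))))
  have hSi : ∀ i, ‖c i‖ ≤ S := fun i => Finset.le_sup' (fun i => ‖c i‖) (Finset.mem_univ i)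
  rw [Matrix.l2_opNorm_def]
  refine ContinuousLinearMap.opNorm_le_bound _ hS0 fun x => ?_
  have hx : (LinearEquiv.trans Matrix.toEuclideanLin
      LinearMap.toContinuousLinearMap (Matrix.diagonal c)) x
      = Matrix.toEuclideanLin (Matrix.diagonal c) x := rfl
  rw [hx, Matrix.toEuclideanLin_apply]
  rw [EuclideanSpace.norm_eq, EuclideanSpace.norm_eq]
  rw [← Real.sqrt_sq hS0, ← Real.sqrt_mul (sq_nonneg S)]
  apply Real.sqrt_le_sqrt
  rw [Finset.mul_sum]
  apply Finset.sum_le_sum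
  intro i _
  have : ((WithLp.equiv 2 (Fin (m + 1) → ℂ)).symm
      (Matrix.diagonal c *ᵥ (WithLp.equiv 2 (Fin (m + 1) → ℂ)) x)) i
      = c i * x i := by
    exact Matrix.mulVec_diagonal c x i
  rw [show (WithLp.toLp 2 (Matrix.diagonal c *ᵥ x.ofLp)).ofLp i = c i * x i from this]
  rw [norm_mul, mul_pow]
  apply mul_le_mul_of_nonneg_right _ (sq_nonneg _)
  have := hSi i
  rw [sq, sq]
  exact mul_le_mul this this (norm_nonneg _) hS0

/-- Residual bound for a second right-hand side when reusing the polynomial `p`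
built from the first right-hand side:
`‖r⁽²⁾‖ ≤ ‖Z‖‖Z⁻¹‖ · max_i |β_i⁽²⁾/β_i⁽¹⁾| · ‖r⁽¹⁾‖`. -/
theorem second_rhs_residual_bound (n : ℕ)
    (A Z : Matrix (Fin (n + 1)) (Fin (n + 1)) ℂ) (Λ : Fin (n + 1) → ℂ)
    (hZ : IsUnit Z.det) (hdiag : A = Z * Matrix.diagonal Λ * Z⁻¹)
    (b1 b2 : EuclideanSpace ℂ (Fin (n + 1))) (hb1 : ‖b1‖ = 1) (hb2 : ‖b2‖ = 1)
    (β1 β2 : Fin (n + 1) → ℂ)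
    (hβ1 : ∀ i, β1 i = Z⁻¹.mulVec b1 i) (hβ2 : ∀ i, β2 i = Z⁻¹.mulVec b2 i)
    (hβ1ne : ∀ i, β1 i ≠ 0)
    (p : Polynomial ℂ)
    (r1 r2 : EuclideanSpace ℂ (Fin (n + 1)))
    (hr1 : r1 = b1 - (WithLp.equiv 2 (Fin (n + 1) → ℂ)).symm
      (A.mulVec ((Polynomial.aeval A p).mulVec b1)))
    (hr2 : r2 = b2 - (WithLp.equiv 2 (Fin (n + 1) → ℂ)).symm
      (A.mulVec ((Polynomial.aeval A p).mulVec b2))) :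
    ‖r2‖ ≤ (‖Z‖ * ‖Z⁻¹‖) *
      (Finset.univ.sup' Finset.univ_nonempty fun i => ‖β2 i / β1 i‖) *
      ‖r1‖ := by
  have hZi : Z⁻¹ * Z = 1 := Matrix.nonsing_inv_mul Z hZ
  have hZi' : Z * Z⁻¹ = 1 := Matrix.mul_nonsing_inv Z hZ
  set c : Fin (n + 1) → ℂ := fun i => β2 i / β1 i with hc
  set D := Matrix.diagonal c with hD
  set B := Z * D * Z⁻¹ with hB
  set q := Polynomial.aeval A p with hq
  -- conjugation multiplication
  have conj_mul : ∀ E F : Matrix (Fin (n + 1)) (Fin (n + 1)) ℂ,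
      (Z * E * Z⁻¹) * (Z * F * Z⁻¹) = Z * (E * F) * Z⁻¹ := by
    intro E F
    simp only [Matrix.mul_assoc]
    rw [← Matrix.mul_assoc Z⁻¹ Z (F * Z⁻¹), hZi, Matrix.one_mul]
  have hAB : A * B = B * A := by
    rw [hdiag, hB, hD, conj_mul, conj_mul, Matrix.diagonal_mul_diagonal,
      Matrix.diagonal_mul_diagonal,
      show (fun i => Λ i * c i) = (fun i => c i * Λ i) from funext fun i => mul_comm _ _]
  have hBA : Commute B A := hAB.symm
  have hBq : Commute B q := by
    rw [hq, Polynomial.aeval_eq_sum_range]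
    apply Commute.sum_right
    intro k _
    exact (hBA.pow_right k).smul_right _
  have hBπ : Commute B (1 - A * q) :=
    (Commute.one_right B).sub_right ((hBA.mul_right hBq))
  -- b2 = B b1
  have hb2B : B.mulVec (WithLp.equiv 2 (Fin (n + 1) → ℂ) b1)
      = WithLp.equiv 2 (Fin (n + 1) → ℂ) b2 := by
    have hDβ : D.mulVec (Z⁻¹.mulVec (WithLp.equiv 2 (Fin (n + 1) → ℂ) b1))
        = Z⁻¹.mulVec (WithLp.equiv 2 (Fin (n + 1) → ℂ) b2) := by
      funext i
      rw [hD, Matrix.mulVec_diagonal]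
      have h1 : (Z⁻¹.mulVec (WithLp.equiv 2 (Fin (n + 1) → ℂ) b1)) i = β1 i := (hβ1 i).symm
      have h2 : (Z⁻¹.mulVec (WithLp.equiv 2 (Fin (n + 1) → ℂ) b2)) i = β2 i := (hβ2 i).symm
      rw [h1, h2, hc]
      exact div_mul_cancel₀ (β2 i) (hβ1ne i)
    rw [hB, ← Matrix.mulVec_mulVec, ← Matrix.mulVec_mulVec, hDβ, Matrix.mulVec_mulVec,
      hZi', Matrix.one_mulVec]
  -- residual as matrix action
  have hres : ∀ b : Fin (n + 1) → ℂ,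
      b - A.mulVec (q.mulVec b) = (1 - A * q).mulVec b := by
    intro b
    rw [Matrix.sub_mulVec, Matrix.one_mulVec, Matrix.mulVec_mulVec]
  have key : WithLp.equiv 2 (Fin (n + 1) → ℂ) r2
      = B.mulVec (WithLp.equiv 2 (Fin (n + 1) → ℂ) r1) := by
    rw [hr1, hr2]
    simp only [WithLp.equiv_apply, WithLp.equiv_symm_apply, WithLp.ofLp_sub, WithLp.ofLp_toLp]
    have e1 : A.mulVec (q.mulVec b1)
        = A.mulVec (q.mulVec (WithLp.equiv 2 (Fin (n + 1) → ℂ) b1)) := rfl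
    have e2 : A.mulVec (q.mulVec b2)
        = A.mulVec (q.mulVec (WithLp.equiv 2 (Fin (n + 1) → ℂ) b2)) := rfl
    rw [hres, hres, ← show B *ᵥ b1.ofLp = b2.ofLp from hb2B, Matrix.mulVec_mulVec, Matrix.mulVec_mulVec, ← hBπ.eq]
  have hr2eq : r2 = (WithLp.equiv 2 (Fin (n + 1) → ℂ)).symm
      (B.mulVec (WithLp.equiv 2 (Fin (n + 1) → ℂ) r1)) := by
    rw [← key, Equiv.symm_apply_apply]
  have h1 : ‖r2‖ ≤ ‖B‖ * ‖r1‖ := by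
    rw [hr2eq]
    exact Matrix.l2_opNorm_mulVec B r1
  have h2 : ‖B‖ ≤ ‖Z‖ * ‖D‖ * ‖Z⁻¹‖ := by
    calc ‖B‖ ≤ ‖Z * D‖ * ‖Z⁻¹‖ := Matrix.l2_opNorm_mul (Z * D) Z⁻¹
    _ ≤ ‖Z‖ * ‖D‖ * ‖Z⁻¹‖ :=
        mul_le_mul_of_nonneg_right (Matrix.l2_opNorm_mul Z D) (norm_nonneg _)
  have h3 : ‖D‖ ≤ Finset.univ.sup' Finset.univ_nonempty fun i => ‖β2 i / β1 i‖ := by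
    rw [hD]
    exact diag_l2_norm_le c
  have hS0 : (0:ℝ) ≤ Finset.univ.sup' Finset.univ_nonempty fun i => ‖β2 i / β1 i‖ :=
    le_trans (norm_nonneg _)
      (Finset.le_sup' (fun i => ‖β2 i / β1 i‖) (Finset.mem_univ (0 : Fin (n+1))))
  have h4 : ‖Z‖ * ‖D‖ * ‖Z⁻¹‖ ≤ (‖Z‖ * ‖Z⁻¹‖) *
      (Finset.univ.sup' Finset.univ_nonempty fun i => ‖β2 i / β1 i‖) := by
    have h5 : ‖Z‖ * ‖D‖ ≤ ‖Z‖ *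
        (Finset.univ.sup' Finset.univ_nonempty fun i => ‖β2 i / β1 i‖) :=
      mul_le_mul_of_nonneg_left h3 (norm_nonneg Z)
    calc ‖Z‖ * ‖D‖ * ‖Z⁻¹‖
        ≤ ‖Z‖ * (Finset.univ.sup' Finset.univ_nonempty fun i => ‖β2 i / β1 i‖)
            * ‖Z⁻¹‖ := mul_le_mul_of_nonneg_right h5 (norm_nonneg _)
      _ = (‖Z‖ * ‖Z⁻¹‖) *
          (Finset.univ.sup' Finset.univ_nonempty fun i => ‖β2 i / β1 i‖) := by ring
  calc ‖r2‖ ≤ ‖B‖ * ‖r1‖ := h1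
    _ ≤ ‖Z‖ * ‖D‖ * ‖Z⁻¹‖ * ‖r1‖ := mul_le_mul_of_nonneg_right h2 (norm_nonneg r1)
    _ ≤ (‖Z‖ * ‖Z⁻¹‖) *
        (Finset.univ.sup' Finset.univ_nonempty fun i => ‖β2 i / β1 i‖) * ‖r1‖ :=
      mul_le_mul_of_nonneg_right h4 (norm_nonneg r1)
end
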